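/- Let A = ⊕_{ν≥0} A_ν be a positively graded affine domain over k, let h ∈ A_m be homogeneous of degree m > 0, and let F = A/(h−1). Then the natural projection ρ : A → F extends to A_h (by ρ(a/h^l) = ρ(a)) and restricts to a ring isomorphism from the degree-zero part A_{(h)} of A_h onto the degree-[0] component F_{[0]} of the ℤ/mℤ-grading of F induced by the action of the group μ_m of m-th roots of unity. -/

import Mathlib

def HomogLoc {k A : Type*} [CommRing k] [CommRing A] [Algebra k A]
    (𝒜 : ℤ → Submodule k A) (w : A) (Dg : ℤ) (n : ℤ) (x : Localization.Away w) : Prop :=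
  ∃ (m : ℕ) (c : A), c ∈ 𝒜 (n + m * Dg) ∧
    x * algebraMap A (Localization.Away w) (w ^ m) = algebraMap A (Localization.Away w) c

section Aux

variable {k A : Type*} [Field k] [CommRing A] [Algebra k A]
  (𝒜 : ℤ → Submodule k A) [GradedAlgebra 𝒜]

lemma mem_of_deg_eq {i j : ℤ} (hij : i = j) {a : A} (ha : a ∈ 𝒜 i) : a ∈ 𝒜 j := hij ▸ ha

lemma decompose_mul_homog {h : A} {m : ℤ} (hh : h ∈ 𝒜 m) (x : A) (d : ℤ) :
    (DirectSum.decompose 𝒜 (x * h) d : A) = (DirectSum.decompose 𝒜 x (d - m) : A) * h := by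
  induction x using DirectSum.Decomposition.inductionOn 𝒜 with
  | zero => simp
  | @homogeneous i y =>
      rcases eq_or_ne d (i + m) with rfl | hne
      · rw [DirectSum.decompose_of_mem_same 𝒜 (SetLike.mul_mem_graded y.2 hh),
          DirectSum.decompose_of_mem_same 𝒜 (show (y : A) ∈ 𝒜 (i + m - m) by
            simpa using y.2)]
      · rw [DirectSum.decompose_of_mem_ne 𝒜 (SetLike.mul_mem_graded y.2 hh) (Ne.symm hne),
          DirectSum.decompose_of_mem_ne 𝒜 y.2 (show i ≠ d - m by omega), zero_mul]
  | add y z hy hz =>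
      rw [add_mul, DirectSum.decompose_add, DirectSum.add_apply,
        DirectSum.decompose_add, DirectSum.add_apply]
      push_cast
      rw [hy, hz]
      ring

lemma homog_ker [IsDomain A]
    (hpos : ∀ ν : ℤ, ν < 0 → 𝒜 ν = ⊥) {m : ℤ} (hm : 0 < m) {h : A} (hh : h ∈ 𝒜 m)
    (hne : h ≠ 0) {ν : ℤ} {a : A} (ha : a ∈ 𝒜 ν) (hmem : a ∈ Ideal.span {h - 1}) :
    a = 0 := by
  obtain ⟨g, hg⟩ := Ideal.mem_span_singleton.mp hmem
  set f : ℤ → A := fun d => (DirectSum.decompose 𝒜 g d : A) with hf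
  have hfneg : ∀ d : ℤ, d < 0 → f d = 0 := by
    intro d hd
    exact (Submodule.eq_bot_iff _).mp (hpos d hd) _ (SetLike.coe_mem _)
  have key : ∀ d : ℤ, d ≠ ν → f d = f (d - m) * h := by
    intro d hd
    have h0 : (DirectSum.decompose 𝒜 a d : A) = 0 :=
      DirectSum.decompose_of_mem_ne 𝒜 ha (Ne.symm hd)
    have ha' : a = g * h - g := by rw [hg]; ring
    rw [ha', DirectSum.decompose_sub, DirectSum.sub_apply] at h0
    push_cast at h0
    rw [decompose_mul_homog 𝒜 hh] at h0
    have h2 := sub_eq_zero.mp h0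
    simpa [hf] using h2.symm
  have low : ∀ d : ℤ, d < ν → f d = 0 := by
    have step : ∀ (j : ℕ) (d : ℤ), d < ν → f d = f (d - j * m) * h ^ j := by
      intro j
      induction j with
      | zero => intro d _; simp
      | succ n ih =>
          intro d hd
          rw [key d (by omega), ih (d - m) (by omega), mul_assoc, ← pow_succ h n]
          congr 2
          push_cast; ring
    intro d hd
    obtain ⟨j, hj⟩ : ∃ j : ℕ, d - j * m < 0 := by
      refine ⟨(d.toNat + 1), ?_⟩
      have h1 : (d : ℤ) ≤ d.toNat := Int.self_le_toNat d
      have h2 : (d.toNat + 1 : ℤ) ≤ (d.toNat + 1 : ℤ) * m :=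
        le_mul_of_one_le_right (by positivity) hm
      push_cast
      nlinarith
    rw [step j d hd, hfneg _ hj, zero_mul]
  have haν : a = - f ν := by
    have h0 : (DirectSum.decompose 𝒜 a ν : A) = a := DirectSum.decompose_of_mem_same 𝒜 ha
    have ha' : a = g * h - g := by rw [hg]; ring
    rw [ha', DirectSum.decompose_sub, DirectSum.sub_apply] at h0
    push_cast at h0
    rw [decompose_mul_homog 𝒜 hh] at h0
    rw [← ha'] at h0
    rw [show (DirectSum.decompose 𝒜 g (ν - m) : A) = f (ν - m) from rfl,
      low (ν - m) (by omega), zero_mul, zero_sub] at h0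
    exact h0.symm
  have high : ∀ j : ℕ, f (ν + (j + 1) * m) = f ν * h ^ (j + 1) := by
    intro j
    induction j with
    | zero =>
        simp only [Nat.cast_zero]
        rw [show ν + ((0:ℤ) + 1) * m = ν + m by ring, key (ν + m) (by omega),
          show ν + m - m = ν by ring, pow_one]
    | succ n ih =>
        push_cast
        have hn : (0:ℤ) ≤ (n:ℤ) := Int.natCast_nonneg n
        rw [key (ν + ((n:ℤ) + 1 + 1) * m) (by nlinarith),
          show ν + ((n:ℤ) + 1 + 1) * m - m = ν + ((n:ℤ) + 1) * m by ring,
          ih, mul_assoc, ← pow_succ h (n + 1)]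
  by_cases hfν : f ν = 0
  · rw [haν, hfν, neg_zero]
  · exfalso
    have hsub : ∀ j : ℕ, (ν + (j + 1) * m) ∈ {d : ℤ | DirectSum.decompose 𝒜 g d ≠ 0} := by
      intro j
      intro hzero
      have hz : f (ν + (j + 1) * m) = 0 := by simp [hf, hzero]
      rw [high j] at hz
      rcases mul_eq_zero.mp hz with h1 | h2
      · exact hfν h1
      · exact hne (pow_eq_zero_iff (by omega) |>.mp h2)
    have hinj : Function.Injective (fun j : ℕ => ν + (j + 1) * m) := by
      intro x y hxy
      simp only at hxy
      have : (x : ℤ) = y := by nlinarith [hxy]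
      exact_mod_cast this
    exact Set.not_infinite.mpr (DFinsupp.finite_support _)
      (Set.infinite_of_injective_forall_mem hinj (fun j => hsub j))

end Aux

theorem stmt7 {k A : Type*} [Field k] [IsAlgClosed k] [CharZero k]
    [CommRing A] [IsDomain A] [Algebra k A] [Algebra.FiniteType k A]
    (𝒜 : ℤ → Submodule k A) [GradedAlgebra 𝒜]
    (hpos : ∀ ν : ℤ, ν < 0 → 𝒜 ν = ⊥)
    (m : ℕ) (hm : 0 < m) (h : A) (hh : h ∈ 𝒜 (m : ℤ)) :
    ∃ ρ' : Localization.Away h →+* (A ⧸ Ideal.span {h - 1}),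
      (∀ a : A, ρ' (algebraMap A (Localization.Away h) a)
          = Ideal.Quotient.mk (Ideal.span {h - 1}) a) ∧
      Set.InjOn ρ' {x | HomogLoc 𝒜 h (m : ℤ) 0 x} ∧
      ρ' '' {x | HomogLoc 𝒜 h (m : ℤ) 0 x}
        = ↑(Submodule.span k ((Ideal.Quotient.mk (Ideal.span {h - 1})) ''
            {a : A | ∃ ν : ℤ, ((ν : ZMod m) = 0) ∧ a ∈ 𝒜 ν})) := by
  have hπh : (Ideal.Quotient.mk (Ideal.span {h - 1})) h = 1 := by
    have h0 : (Ideal.Quotient.mk (Ideal.span {h - 1})) (h - 1) = 0 :=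
      Ideal.Quotient.eq_zero_iff_mem.mpr (Ideal.subset_span rfl)
    rw [map_sub, map_one, sub_eq_zero] at h0
    exact h0
  have hunit : IsUnit ((Ideal.Quotient.mk (Ideal.span {h - 1})) h) := hπh ▸ isUnit_one
  set π := Ideal.Quotient.mk (Ideal.span {h - 1}) with hπ
  set ρ' := Localization.awayLift π h hunit with hρ
  have hcomp : ∀ a : A, ρ' (algebraMap A (Localization.Away h) a) = π a := fun a =>
    IsLocalization.Away.lift_eq h hunit a
  have hval : ∀ (x : Localization.Away h) (p : ℕ) (c : A),
      x * algebraMap A (Localization.Away h) (h ^ p) = algebraMap A (Localization.Away h) c →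
      ρ' x = π c := by
    intro x p c hx
    have := congrArg ρ' hx
    rw [map_mul, hcomp, hcomp, map_pow, hπh, one_pow, mul_one] at this
    exact this
  have hmZ : (0:ℤ) < (m:ℤ) := by exact_mod_cast hm
  have hS0 : HomogLoc 𝒜 h (m:ℤ) 0 (0 : Localization.Away h) :=
    ⟨0, 0, zero_mem _, by simp⟩
  refine ⟨ρ', hcomp, ?_, ?_⟩
  · -- injectivity on the degree-zero part
    rcases eq_or_ne h 0 with hz | hne
    · haveI : Subsingleton (Localization.Away h) :=
        IsLocalization.subsingleton (M := Submonoid.powers h) ⟨1, by simp [hz]⟩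
      intro x _ y _ _
      exact Subsingleton.elim x y
    · rintro x ⟨p, c, hc, hxc⟩ y ⟨q, d, hd, hyd⟩ hxy
      have hx' : ρ' x = π c := hval x p c hxc
      have hy' : ρ' y = π d := hval y q d hyd
      have hπcd : π (c * h ^ q) = π (d * h ^ p) := by
        rw [map_mul, map_mul, map_pow, map_pow, hπh, one_pow, one_pow, mul_one,
          mul_one, ← hx', ← hy', hxy]
      have hmem : c * h ^ q - d * h ^ p ∈ Ideal.span {h - 1} :=
        (Ideal.Quotient.mk_eq_mk_iff_sub_mem _ _).mp hπcd
      have hc' : c * h ^ q ∈ 𝒜 ((0 + (p:ℤ) * (m:ℤ)) + q • (m:ℤ)) :=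
        SetLike.mul_mem_graded hc (SetLike.pow_mem_graded q hh)
      have hd' : d * h ^ p ∈ 𝒜 ((0 + (p:ℤ) * (m:ℤ)) + q • (m:ℤ)) := by
        refine mem_of_deg_eq 𝒜 ?_ (SetLike.mul_mem_graded hd (SetLike.pow_mem_graded p hh))
        push_cast [nsmul_eq_mul]
        ring
      have hhom : c * h ^ q - d * h ^ p ∈ 𝒜 ((0 + (p:ℤ) * (m:ℤ)) + q • (m:ℤ)) :=
        sub_mem hc' hd'
      have heq : c * h ^ q = d * h ^ p :=
        sub_eq_zero.mp (homog_ker 𝒜 hpos hmZ hh hne hhom hmem)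
      have hu : IsUnit (algebraMap A (Localization.Away h) (h ^ p)
          * algebraMap A (Localization.Away h) (h ^ q)) := by
        rw [map_pow, map_pow]
        exact ((IsLocalization.Away.algebraMap_isUnit (S := Localization.Away h) h).pow p).mul
          ((IsLocalization.Away.algebraMap_isUnit (S := Localization.Away h) h).pow q)
      have hxy2 : x * (algebraMap A (Localization.Away h) (h ^ p)
          * algebraMap A (Localization.Away h) (h ^ q))
          = y * (algebraMap A (Localization.Away h) (h ^ p)
          * algebraMap A (Localization.Away h) (h ^ q)) := by
        calc x * (algebraMap A (Localization.Away h) (h ^ p)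
              * algebraMap A (Localization.Away h) (h ^ q))
            = (x * algebraMap A (Localization.Away h) (h ^ p))
              * algebraMap A (Localization.Away h) (h ^ q) := by ring
          _ = algebraMap A (Localization.Away h) c
              * algebraMap A (Localization.Away h) (h ^ q) := by rw [hxc]
          _ = algebraMap A (Localization.Away h) (c * h ^ q) := (map_mul _ _ _).symm
          _ = algebraMap A (Localization.Away h) (d * h ^ p) := by rw [heq]
          _ = algebraMap A (Localization.Away h) d
              * algebraMap A (Localization.Away h) (h ^ p) := map_mul _ _ _
          _ = (y * algebraMap A (Localization.Away h) (h ^ q))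
              * algebraMap A (Localization.Away h) (h ^ p) := by rw [hyd]
          _ = y * (algebraMap A (Localization.Away h) (h ^ p)
              * algebraMap A (Localization.Away h) (h ^ q)) := by ring
      rw [mul_comm x, mul_comm y] at hxy2
      exact hu.mul_left_cancel hxy2
  · -- image equality
    apply Set.Subset.antisymm
    · rintro _ ⟨x, ⟨p, c, hc, hxc⟩, rfl⟩
      have : ρ' x = π c := hval x p c hxc
      rw [this]
      refine Submodule.subset_span ⟨c, ⟨(0 + (p:ℤ) * (m:ℤ)), ?_, hc⟩, rfl⟩
      push_cast
      simp
    · set M : Submodule k (A ⧸ Ideal.span {h - 1}) :=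
        { carrier := ρ' '' {x | HomogLoc 𝒜 h (m:ℤ) 0 x}
          zero_mem' := ⟨0, hS0, map_zero ρ'⟩
          add_mem' := by
            rintro _ _ ⟨x, ⟨p, c, hc, hxc⟩, rfl⟩ ⟨y, ⟨q, d, hd, hyd⟩, rfl⟩
            refine ⟨x + y, ⟨p + q, c * h ^ q + d * h ^ p, ?_, ?_⟩, map_add ρ' x y⟩
            · refine add_mem (mem_of_deg_eq 𝒜 ?_
                (SetLike.mul_mem_graded hc (SetLike.pow_mem_graded q hh)))
                (mem_of_deg_eq 𝒜 ?_
                (SetLike.mul_mem_graded hd (SetLike.pow_mem_graded p hh))) <;>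
              · push_cast [nsmul_eq_mul]; ring
            · rw [pow_add, map_mul]
              calc (x + y) * (algebraMap A (Localization.Away h) (h ^ p)
                      * algebraMap A (Localization.Away h) (h ^ q))
                  = (x * algebraMap A (Localization.Away h) (h ^ p))
                      * algebraMap A (Localization.Away h) (h ^ q)
                    + (y * algebraMap A (Localization.Away h) (h ^ q))
                      * algebraMap A (Localization.Away h) (h ^ p) := by ring
                _ = algebraMap A (Localization.Away h) (c * h ^ q)
                    + algebraMap A (Localization.Away h) (d * h ^ p) := by
                      rw [hxc, hyd, map_mul, map_mul]
                _ = algebraMap A (Localization.Away h) (c * h ^ q + d * h ^ p) := by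
                      rw [map_add]
          smul_mem' := by
            rintro r _ ⟨x, ⟨p, c, hc, hxc⟩, rfl⟩
            have hsx : HomogLoc 𝒜 h (m:ℤ) 0 (r • x) := by
              refine ⟨p, r • c, Submodule.smul_mem _ r hc, ?_⟩
              rw [Algebra.smul_def, Algebra.smul_def,
                IsScalarTower.algebraMap_apply k A (Localization.Away h), map_mul,
                mul_assoc, hxc]
            refine ⟨r • x, hsx, ?_⟩
            rw [Algebra.smul_def, Algebra.smul_def, map_mul,
              IsScalarTower.algebraMap_apply k A (Localization.Away h), hcomp,
              IsScalarTower.algebraMap_apply k A (A ⧸ Ideal.span {h - 1})]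
            rfl } with hM
      intro z hz
      refine (Submodule.span_le.mpr ?_ : _ ≤ M) hz
      rintro _ ⟨a, ⟨ν, hν0, haν⟩, rfl⟩
      rcases eq_or_ne a 0 with rfl | ha0
      · rw [map_zero]
        exact M.zero_mem
      · have hν : 0 ≤ ν := by
          by_contra hlt
          push_neg at hlt
          rw [hpos ν hlt] at haν
          exact ha0 (by simpa using haν)
        obtain ⟨t, ht⟩ : ((m:ℤ)) ∣ ν := (ZMod.intCast_zmod_eq_zero_iff_dvd ν m).mp hν0
        have htn : 0 ≤ t := by nlinarith
        set p : ℕ := t.toNat with hp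
        have hpt : (p : ℤ) = t := Int.toNat_of_nonneg htn
        have hph : h ^ p ∈ Submonoid.powers h := ⟨p, rfl⟩
        set x : Localization.Away h :=
          IsLocalization.mk' (Localization.Away h) a ⟨h ^ p, hph⟩ with hx
        have hspec : x * algebraMap A (Localization.Away h) (h ^ p)
            = algebraMap A (Localization.Away h) a :=
          IsLocalization.mk'_spec (Localization.Away h) a ⟨h ^ p, hph⟩
        have hhl : HomogLoc 𝒜 h (m:ℤ) 0 x := by
          refine ⟨p, a, mem_of_deg_eq 𝒜 ?_ haν, hspec⟩
          rw [ht, hpt]; ring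
        exact ⟨x, hhl, hval x p a hspec⟩
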